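/- (Lemma 2.4) For every τ, ν, γ > 0 and every admissible v, ∫_Z ( −∂_s² v − 4 (τ^{2γ/3}/ν²) s² v ) · ( −4 (τ^{γ/3}/ν) s ∂_s v − 2 (τ^{γ/3}/ν) v ) ds dx = −4 (τ^{γ/3}/ν) ∫_Z |∂_s v|² − 16 (τ^γ/ν³) ∫_Z s² |v|² + B₁(v), where B₁(v) = 2 (τ^{γ/3}/ν) ∫_0^1 [ s |∂_s v|² ]_{s=−S0}^{s=S0} dx + 2 (τ^{γ/3}/ν) ∫_0^1 [ v ∂_s v ]_{s=−S0}^{s=S0} dx + 8 (τ^γ/ν³) ∫_0^1 [ s³ |v|² ]_{s=−S0}^{s=S0} dx. -/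

import Mathlib

open MeasureTheory Set Filter
open scoped ENNReal

noncomputable section

/-- The rectangle `Z = (-S0,S0) × (0,1)`, with variables `(s,x)`. -/
def Zset (S0 : ℝ) : Set (ℝ × ℝ) := Ioo (-S0) S0 ×ˢ Ioo (0:ℝ) 1

/-- auxiliary: the s-antiderivative of the integrand (plus bulk terms). -/
def Ffun (a : ℝ) (v vs : ℝ → ℝ → ℝ) (s x : ℝ) : ℝ :=
  2*a*s*(vs s x)^2 + 2*a*(v s x)*(vs s x) + 8*a^3*s^3*(v s x)^2

/-- auxiliary: its s-derivative. -/
def Fsfun (a : ℝ) (v vs vss : ℝ → ℝ → ℝ) (s x : ℝ) : ℝ :=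
  (2*a*(vs s x)^2 + 2*a*s*(2*(vs s x)*(vss s x)))
  + (2*a*(vs s x)*(vs s x) + 2*a*(v s x)*(vss s x))
  + (8*a^3*(3*s^2)*(v s x)^2 + 8*a^3*s^3*(2*(v s x)*(vs s x)))

/-- Lemma 2.4. -/
theorem lemma_2_4
    (α S0 τ ν γ : ℝ) (hα : α ∈ Ioo (0:ℝ) 2) (hS0 : 0 < S0)
    (hτ : 0 < τ) (hν : 0 < ν) (hγ : 0 < γ)
    (v vs vss vx Pv : ℝ → ℝ → ℝ)
    -- v is smooth in the variable s
    (hvs : ∀ x ∈ Ioo (0:ℝ) 1, ∀ s ∈ Icc (-S0) S0, HasDerivAt (fun r => v r x) (vs s x) s)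
    (hvss : ∀ x ∈ Ioo (0:ℝ) 1, ∀ s ∈ Icc (-S0) S0, HasDerivAt (fun r => vs r x) (vss s x) s)
    -- x-derivatives of v (s-sections belong to D(P))
    (hvx : ∀ s ∈ Icc (-S0) S0, ∀ x ∈ Ioo (0:ℝ) 1, HasDerivAt (fun y => v s y) (vx s x) x)
    (hPv : ∀ s ∈ Icc (-S0) S0, ∀ x ∈ Ioo (0:ℝ) 1,
      HasDerivAt (fun y => y ^ α * vx s y) (Pv s x) x)
    -- boundary conditions contained in H¹_α(0,1) and in D(P)
    (hbc1 : ∀ s ∈ Icc (-S0) S0, Tendsto (fun x => v s x) (nhdsWithin 1 (Iio 1)) (nhds 0))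
    (hbc0w : ∀ s ∈ Icc (-S0) S0, α < 1 →
      Tendsto (fun x => v s x) (nhdsWithin 0 (Ioi 0)) (nhds 0))
    (hbc0s : ∀ s ∈ Icc (-S0) S0, 1 ≤ α →
      Tendsto (fun x => x ^ α * vx s x) (nhdsWithin 0 (Ioi 0)) (nhds 0))
    -- integrability conditions contained in H¹_α(0,1) and in D(P)
    (hL2 : ∀ s ∈ Icc (-S0) S0, ∫⁻ x in Ioo (0:ℝ) 1, ENNReal.ofReal ((v s x) ^ 2) < ⊤)
    (hL2x : ∀ s ∈ Icc (-S0) S0, ∫⁻ x in Ioo (0:ℝ) 1, ENNReal.ofReal (x ^ α * (vx s x) ^ 2) < ⊤)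
    (hL2P : ∀ s ∈ Icc (-S0) S0, ∫⁻ x in Ioo (0:ℝ) 1, ENNReal.ofReal ((Pv s x) ^ 2) < ⊤)
    -- all the occurring integrals are finite
    (hI : IntegrableOn (fun p : ℝ × ℝ =>
      (-(vss p.1 p.2) - 4 * (τ ^ (2 * γ / 3) / ν ^ 2) * p.1 ^ 2 * v p.1 p.2) *
        (-(4 * (τ ^ (γ / 3) / ν) * p.1 * vs p.1 p.2) - 2 * (τ ^ (γ / 3) / ν) * v p.1 p.2))
      (Zset S0))
    (hI1 : IntegrableOn (fun p : ℝ × ℝ => (vs p.1 p.2) ^ 2) (Zset S0))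
    (hI2 : IntegrableOn (fun p : ℝ × ℝ => p.1 ^ 2 * (v p.1 p.2) ^ 2) (Zset S0))
    (hIb1 : IntegrableOn
      (fun x => S0 * (vs S0 x) ^ 2 - (-S0) * (vs (-S0) x) ^ 2) (Ioo (0:ℝ) 1))
    (hIb2 : IntegrableOn
      (fun x => v S0 x * vs S0 x - v (-S0) x * vs (-S0) x) (Ioo (0:ℝ) 1))
    (hIb3 : IntegrableOn
      (fun x => S0 ^ 3 * (v S0 x) ^ 2 - (-S0) ^ 3 * (v (-S0) x) ^ 2) (Ioo (0:ℝ) 1)) :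
    (∫ p in Zset S0,
        (-(vss p.1 p.2) - 4 * (τ ^ (2 * γ / 3) / ν ^ 2) * p.1 ^ 2 * v p.1 p.2) *
          (-(4 * (τ ^ (γ / 3) / ν) * p.1 * vs p.1 p.2) - 2 * (τ ^ (γ / 3) / ν) * v p.1 p.2))
      = -(4 * (τ ^ (γ / 3) / ν) * ∫ p in Zset S0, (vs p.1 p.2) ^ 2)
        - 16 * (τ ^ γ / ν ^ 3) * (∫ p in Zset S0, p.1 ^ 2 * (v p.1 p.2) ^ 2)
        + (2 * (τ ^ (γ / 3) / ν) *
            (∫ x in Ioo (0:ℝ) 1, (S0 * (vs S0 x) ^ 2 - (-S0) * (vs (-S0) x) ^ 2))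
          + 2 * (τ ^ (γ / 3) / ν) *
            (∫ x in Ioo (0:ℝ) 1, (v S0 x * vs S0 x - v (-S0) x * vs (-S0) x))
          + 8 * (τ ^ γ / ν ^ 3) *
            (∫ x in Ioo (0:ℝ) 1, (S0 ^ 3 * (v S0 x) ^ 2 - (-S0) ^ 3 * (v (-S0) x) ^ 2))) := by
  have hS : -S0 ≤ S0 := by linarith
  set a : ℝ := τ ^ (γ / 3) / ν with ha
  have ha2 : τ ^ (2 * γ / 3) / ν ^ 2 = a ^ 2 := by
    rw [ha, div_pow]
    congr 1
    rw [← Real.rpow_natCast (τ ^ (γ/3)) 2, ← Real.rpow_mul hτ.le]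
    congr 1
    push_cast; ring
  have ha3 : τ ^ γ / ν ^ 3 = a ^ 3 := by
    rw [ha, div_pow]
    congr 1
    rw [← Real.rpow_natCast (τ ^ (γ/3)) 3, ← Real.rpow_mul hτ.le]
    congr 1
    push_cast; ring
  simp only [ha2, ha3] at hI ⊢
  -- derivative of F
  have hF : ∀ x ∈ Ioo (0:ℝ) 1, ∀ s ∈ Icc (-S0) S0,
      HasDerivAt (fun r => Ffun a v vs r x) (Fsfun a v vs vss s x) s := by
    intro x hx s hs
    have h1 := hvs x hx s hs
    have h2 := hvss x hx s hs
    have hd :=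
      ((((hasDerivAt_id s).const_mul (2*a)).mul (h2.pow 2)).add
        (((h1.const_mul (2*a)).mul h2).add
        ((((hasDerivAt_pow 3 s)).const_mul (8*a^3)).mul (h1.pow 2))))
    convert hd using 1
    · rfl
    · rfl
    · funext r
      simp [Ffun]; ring
    · simp [Fsfun]; ring
  -- Fsfun = integrand + bulk terms, pointwise (a ring identity)
  have hked : (fun p : ℝ × ℝ => Fsfun a v vs vss p.1 p.2)
      = fun p : ℝ × ℝ =>
        ((-(vss p.1 p.2) - 4 * a ^ 2 * p.1 ^ 2 * v p.1 p.2) *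
          (-(4 * a * p.1 * vs p.1 p.2) - 2 * a * v p.1 p.2)
        + (4 * a) * (vs p.1 p.2) ^ 2) + (16 * a ^ 3) * (p.1 ^ 2 * (v p.1 p.2) ^ 2) := by
    funext p
    simp only [Fsfun]
    ring
  have hFs_int : IntegrableOn (fun p : ℝ × ℝ => Fsfun a v vs vss p.1 p.2) (Zset S0) := by
    rw [hked]
    exact (hI.add (hI1.const_mul _)).add (hI2.const_mul _)
  -- split the main integral
  have e1 : (∫ p in Zset S0, Fsfun a v vs vss p.1 p.2)
      = (∫ p in Zset S0,
          (-(vss p.1 p.2) - 4 * a ^ 2 * p.1 ^ 2 * v p.1 p.2) *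
            (-(4 * a * p.1 * vs p.1 p.2) - 2 * a * v p.1 p.2))
        + (4 * a) * (∫ p in Zset S0, (vs p.1 p.2) ^ 2)
        + (16 * a ^ 3) * (∫ p in Zset S0, p.1 ^ 2 * (v p.1 p.2) ^ 2) := by
    have hB1 : IntegrableOn (fun p : ℝ × ℝ => (4 * a) * (vs p.1 p.2) ^ 2) (Zset S0) :=
      hI1.const_mul _
    have hC1 : IntegrableOn
        (fun p : ℝ × ℝ => (16 * a ^ 3) * (p.1 ^ 2 * (v p.1 p.2) ^ 2)) (Zset S0) :=
      hI2.const_mul _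
    have hA1 : IntegrableOn (fun p : ℝ × ℝ =>
        (-(vss p.1 p.2) - 4 * a ^ 2 * p.1 ^ 2 * v p.1 p.2) *
          (-(4 * a * p.1 * vs p.1 p.2) - 2 * a * v p.1 p.2)
        + (4 * a) * (vs p.1 p.2) ^ 2) (Zset S0) := hI.add hB1
    rw [hked, integral_add hA1 hC1, integral_add hI hB1, integral_const_mul,
      integral_const_mul]
  -- Fubini and FTC in s
  have hprod : (volume : Measure (ℝ × ℝ)).restrict (Zset S0)
      = (volume.restrict (Ioo (-S0) S0)).prod (volume.restrict (Ioo (0:ℝ) 1)) := by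
    rw [Zset, Measure.volume_eq_prod, Measure.prod_restrict]
  have hFs_int' : Integrable (fun p : ℝ × ℝ => Fsfun a v vs vss p.1 p.2)
      ((volume.restrict (Ioo (-S0) S0)).prod (volume.restrict (Ioo (0:ℝ) 1))) := by
    rw [← hprod]; exact hFs_int
  have hfub : (∫ p in Zset S0, Fsfun a v vs vss p.1 p.2)
      = ∫ x in Ioo (0:ℝ) 1, ∫ s in Ioo (-S0) S0, Fsfun a v vs vss s x := by
    have h := integral_prod_symm (fun p : ℝ × ℝ => Fsfun a v vs vss p.1 p.2) hFs_int'
    rw [hprod]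
    exact h
  have hsec : ∀ᵐ x ∂(volume.restrict (Ioo (0:ℝ) 1)),
      Integrable (fun s => Fsfun a v vs vss s x) (volume.restrict (Ioo (-S0) S0)) :=
    hFs_int'.prod_left_ae
  have hmem : ∀ᵐ x ∂(volume.restrict (Ioo (0:ℝ) 1)), x ∈ Ioo (0:ℝ) 1 :=
    ae_restrict_mem measurableSet_Ioo
  have hinner : ∀ᵐ x ∂(volume.restrict (Ioo (0:ℝ) 1)),
      (∫ s in Ioo (-S0) S0, Fsfun a v vs vss s x)
        = Ffun a v vs S0 x - Ffun a v vs (-S0) x := by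
    filter_upwards [hsec, hmem] with x hxi hx
    have hxi' : IntegrableOn (fun s => Fsfun a v vs vss s x) (Ioo (-S0) S0) volume := hxi
    have hIoc : IntegrableOn (fun s => Fsfun a v vs vss s x) (Ioc (-S0) S0) volume :=
      hxi'.congr_set_ae Ioo_ae_eq_Ioc.symm
    have hii : IntervalIntegrable (fun s => Fsfun a v vs vss s x) volume (-S0) S0 :=
      (intervalIntegrable_iff_integrableOn_Ioc_of_le hS).mpr hIoc
    have hder : ∀ s ∈ uIcc (-S0) S0,
        HasDerivAt (fun r => Ffun a v vs r x) (Fsfun a v vs vss s x) s := by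
      intro s hs
      rw [uIcc_of_le hS] at hs
      exact hF x hx s hs
    have hftc := intervalIntegral.integral_eq_sub_of_hasDerivAt hder hii
    rw [← integral_Ioc_eq_integral_Ioo, ← intervalIntegral.integral_of_le hS, hftc]
  have hB : (∫ p in Zset S0, Fsfun a v vs vss p.1 p.2)
      = 2 * a * (∫ x in Ioo (0:ℝ) 1, (S0 * (vs S0 x) ^ 2 - (-S0) * (vs (-S0) x) ^ 2))
        + 2 * a * (∫ x in Ioo (0:ℝ) 1, (v S0 x * vs S0 x - v (-S0) x * vs (-S0) x))
        + 8 * a ^ 3 * (∫ x in Ioo (0:ℝ) 1,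
            (S0 ^ 3 * (v S0 x) ^ 2 - (-S0) ^ 3 * (v (-S0) x) ^ 2)) := by
    rw [hfub, integral_congr_ae hinner]
    have hee : (fun x => Ffun a v vs S0 x - Ffun a v vs (-S0) x)
        = fun x => (2 * a) * (S0 * (vs S0 x) ^ 2 - (-S0) * (vs (-S0) x) ^ 2)
          + ((2 * a) * (v S0 x * vs S0 x - v (-S0) x * vs (-S0) x)
          + (8 * a ^ 3) * (S0 ^ 3 * (v S0 x) ^ 2 - (-S0) ^ 3 * (v (-S0) x) ^ 2)) := by
      funext x
      simp only [Ffun]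
      ring
    rw [show (∫ x in Ioo (0:ℝ) 1, (Ffun a v vs S0 x - Ffun a v vs (-S0) x))
        = ∫ x in Ioo (0:ℝ) 1, ((2 * a) * (S0 * (vs S0 x) ^ 2 - (-S0) * (vs (-S0) x) ^ 2)
          + ((2 * a) * (v S0 x * vs S0 x - v (-S0) x * vs (-S0) x)
          + (8 * a ^ 3) * (S0 ^ 3 * (v S0 x) ^ 2 - (-S0) ^ 3 * (v (-S0) x) ^ 2)))
      from by rw [hee]]
    have hb2 : IntegrableOn
        (fun x => (2 * a) * (v S0 x * vs S0 x - v (-S0) x * vs (-S0) x)) (Ioo (0:ℝ) 1) :=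
      hIb2.const_mul _
    have hb3 : IntegrableOn
        (fun x => (8 * a ^ 3) * (S0 ^ 3 * (v S0 x) ^ 2 - (-S0) ^ 3 * (v (-S0) x) ^ 2))
        (Ioo (0:ℝ) 1) := hIb3.const_mul _
    have hb23 : IntegrableOn
        (fun x => (2 * a) * (v S0 x * vs S0 x - v (-S0) x * vs (-S0) x)
          + (8 * a ^ 3) * (S0 ^ 3 * (v S0 x) ^ 2 - (-S0) ^ 3 * (v (-S0) x) ^ 2))
        (Ioo (0:ℝ) 1) := hb2.add hb3
    rw [integral_add (hIb1.const_mul _) hb23, integral_add hb2 hb3,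
      integral_const_mul, integral_const_mul, integral_const_mul]
    ring
  linarith [e1, hB]
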